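/- (Bretagnolle–Huber inequality) For any two probability measures P and Q on a common measurable space, TV(P,Q) ≤ sqrt(1 − exp(−KL(P‖Q))). -/

import Mathlib

/-!
Bretagnolle–Huber inequality: TV(P,Q) ≤ sqrt(1 − exp(−KL(P‖Q))).
-/

open MeasureTheory
open scoped ENNReal Classical

/-- Total variation distance `TV(P,Q) = sup_E |P(E) − Q(E)|` over measurable events. -/
noncomputable def tvDist {Ω : Type*} [MeasurableSpace Ω] (P Q : Measure Ω) : ℝ :=
  ⨆ E : {s : Set Ω // MeasurableSet s}, |(P E.1).toReal - (Q E.1).toReal|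

/-- Kullback–Leibler divergence (in nats): `∫ ln(dP/dQ) dP` when `P ≪ Q` (and the
log-likelihood ratio is integrable), and `+∞` otherwise. -/
noncomputable def klDivM {Ω : Type*} [MeasurableSpace Ω] (P Q : Measure Ω) : ℝ≥0∞ :=
  if P ≪ Q ∧ Integrable (llr P Q) P then ENNReal.ofReal (∫ ω, llr P Q ω ∂P) else ⊤

lemma BH_set_bound {Ω : Type*} [MeasurableSpace Ω] (P Q : Measure Ω)
    (s : Set Ω) :
    ∫⁻ x in s, (Q.rnDeriv P x) ^ (1/2 : ℝ) ∂P ≤ (Q s) ^ (1/2:ℝ) * (P s) ^ (1/2:ℝ) := by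
  have hmeas : AEMeasurable (fun x => (Q.rnDeriv P x) ^ (1/2:ℝ)) (P.restrict s) :=
    ((Measure.measurable_rnDeriv Q P).pow_const _).aemeasurable
  have hconj : (2:ℝ).HolderConjugate 2 := Real.HolderConjugate.two_two
  have holder := ENNReal.lintegral_mul_le_Lp_mul_Lq (P.restrict s) hconj hmeas
    (aemeasurable_const (b := (1:ℝ≥0∞)))
  simp only [Pi.mul_apply, mul_one, ENNReal.one_rpow, lintegral_const,
    Measure.restrict_apply_univ, one_mul] at holder
  calc ∫⁻ x in s, (Q.rnDeriv P x) ^ (1/2 : ℝ) ∂P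
      ≤ (∫⁻ x in s, ((Q.rnDeriv P x) ^ (1/2:ℝ)) ^ (2:ℝ) ∂P) ^ (1/2:ℝ) * (P s) ^ (1/2:ℝ) :=
        holder
    _ = (∫⁻ x in s, Q.rnDeriv P x ∂P) ^ (1/2:ℝ) * (P s) ^ (1/2:ℝ) := by
        congr 2
        refine lintegral_congr fun x => ?_
        rw [← ENNReal.rpow_mul]
        norm_num
    _ ≤ (Q s) ^ (1/2:ℝ) * (P s) ^ (1/2:ℝ) := by
        gcongr
        exact Measure.setLIntegral_rnDeriv_le s


lemma BH_key {Ω : Type*} [MeasurableSpace Ω] (P Q : Measure Ω)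
    [IsProbabilityMeasure P] [IsProbabilityMeasure Q] (hPQ : P ≪ Q)
    (hint : Integrable (llr P Q) P) (E : Set Ω) (hE : MeasurableSet E) :
    Real.exp (-(∫ x, llr P Q x ∂P)) ≤ 1 - ((P E).toReal - (Q E).toReal)^2 := by
  set G := Q.rnDeriv P with hG
  -- integrability of sqrt of density
  have hGint : Integrable (fun x => (G x).toReal) P := Measure.integrable_toReal_rnDeriv
  have hsqrt_meas : StronglyMeasurable fun x => Real.sqrt (G x).toReal :=
    ((Measure.measurable_rnDeriv Q P).ennreal_toReal.sqrt).stronglyMeasurable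
  have hSint : Integrable (fun x => Real.sqrt (G x).toReal) P := by
    refine (hGint.add (integrable_const 1)).mono hsqrt_meas.aestronglyMeasurable
      (Filter.Eventually.of_forall fun x => ?_)
    have h0 : (0:ℝ) ≤ (G x).toReal := ENNReal.toReal_nonneg
    simp only [Pi.add_apply, Real.norm_eq_abs]
    rw [abs_of_nonneg (Real.sqrt_nonneg _), abs_of_nonneg (by linarith)]
    nlinarith [Real.sq_sqrt h0, Real.sqrt_nonneg (G x).toReal]
  -- exp(-llr/2) = sqrt density a.e.
  have h_eq : (fun x => Real.exp (-(1/2) * llr P Q x)) =ᵐ[P] fun x => Real.sqrt (G x).toReal := by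
    filter_upwards [exp_neg_llr hPQ] with x hx
    have h2 : Real.exp (-llr P Q x) = (Real.exp (-(1/2) * llr P Q x))^2 := by
      rw [sq, ← Real.exp_add]; ring_nf
    rw [← hx, h2, Real.sqrt_sq (Real.exp_nonneg _)]
  set S : ℝ := ∫ x, Real.sqrt (G x).toReal ∂P with hS
  have hS_nonneg : 0 ≤ S :=
    integral_nonneg fun x => Real.sqrt_nonneg _
  -- Jensen
  have h_jensen : Real.exp (∫ x, -(1/2) * llr P Q x ∂P) ≤ S := by
    have hfi : Integrable (fun x => -(1/2) * llr P Q x) P := hint.const_mul _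
    have hgi : Integrable (fun x => Real.exp (-(1/2) * llr P Q x)) P :=
      hSint.congr h_eq.symm
    have := convexOn_exp.map_integral_le (μ := P) Real.continuous_exp.continuousOn isClosed_univ
      (Filter.Eventually.of_forall fun x => Set.mem_univ _) hfi
      (by exact hgi)
    rw [hS, ← integral_congr_ae h_eq]
    exact this
  have h_exp_sq : Real.exp (-(∫ x, llr P Q x ∂P)) ≤ S^2 := by
    have : Real.exp (-(∫ x, llr P Q x ∂P)) = (Real.exp (∫ x, -(1/2) * llr P Q x ∂P))^2 := by
      rw [integral_const_mul, sq, ← Real.exp_add]; ring_nf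
    rw [this]
    exact pow_le_pow_left₀ (Real.exp_nonneg _) h_jensen 2
  -- convert S to a lintegral
  have h_ofReal : ENNReal.ofReal S = ∫⁻ x, G x ^ (1/2:ℝ) ∂P := by
    rw [hS, MeasureTheory.ofReal_integral_eq_lintegral_ofReal hSint
      (Filter.Eventually.of_forall fun x => Real.sqrt_nonneg _)]
    refine lintegral_congr_ae ?_
    filter_upwards [Measure.rnDeriv_lt_top Q P] with x hx
    rw [Real.sqrt_eq_rpow, ENNReal.toReal_rpow, ENNReal.ofReal_toReal]
    exact (ENNReal.rpow_lt_top_of_nonneg (by norm_num) hx.ne).ne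
  -- split and bound
  have h_split : ENNReal.ofReal S ≤
      (Q E)^(1/2:ℝ) * (P E)^(1/2:ℝ) + (Q Eᶜ)^(1/2:ℝ) * (P Eᶜ)^(1/2:ℝ) := by
    rw [h_ofReal, ← lintegral_add_compl _ hE]
    exact add_le_add (BH_set_bound P Q E) (BH_set_bound P Q Eᶜ)
  -- pass to reals
  set a := (P E).toReal with ha
  set b := (Q E).toReal with hb
  have ha01 : 0 ≤ a ∧ a ≤ 1 := ⟨ENNReal.toReal_nonneg, by
    rw [ha]; exact ENNReal.toReal_le_of_le_ofReal zero_le_one (by simpa using prob_le_one)⟩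
  have hb01 : 0 ≤ b ∧ b ≤ 1 := ⟨ENNReal.toReal_nonneg, by
    rw [hb]; exact ENNReal.toReal_le_of_le_ofReal zero_le_one (by simpa using prob_le_one)⟩
  have haC : (P Eᶜ).toReal = 1 - a := by
    rw [measure_compl hE (measure_ne_top _ _), measure_univ,
      ENNReal.toReal_sub_of_le (by simpa using prob_le_one) ENNReal.one_ne_top]
    simp [ha]
  have hbC : (Q Eᶜ).toReal = 1 - b := by
    rw [measure_compl hE (measure_ne_top _ _), measure_univ,
      ENNReal.toReal_sub_of_le (by simpa using prob_le_one) ENNReal.one_ne_top]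
    simp [hb]
  have hS_le : S ≤ Real.sqrt b * Real.sqrt a + Real.sqrt (1-b) * Real.sqrt (1-a) := by
    have hne : ((Q E)^(1/2:ℝ) * (P E)^(1/2:ℝ) + (Q Eᶜ)^(1/2:ℝ) * (P Eᶜ)^(1/2:ℝ)) ≠ ⊤ := by
      refine ENNReal.add_ne_top.2 ⟨?_, ?_⟩ <;>
        exact ENNReal.mul_ne_top
          (ENNReal.rpow_lt_top_of_nonneg (by norm_num) (measure_ne_top _ _)).ne
          (ENNReal.rpow_lt_top_of_nonneg (by norm_num) (measure_ne_top _ _)).ne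
    have := ENNReal.toReal_mono hne h_split
    rw [ENNReal.toReal_ofReal hS_nonneg] at this
    refine this.trans_eq ?_
    rw [ENNReal.toReal_add, ENNReal.toReal_mul, ENNReal.toReal_mul,
      ← ENNReal.toReal_rpow, ← ENNReal.toReal_rpow, ← ENNReal.toReal_rpow,
      ← ENNReal.toReal_rpow, haC, hbC, ← ha, ← hb]
    · rw [← Real.sqrt_eq_rpow, ← Real.sqrt_eq_rpow, ← Real.sqrt_eq_rpow, ← Real.sqrt_eq_rpow]
    · exact ENNReal.mul_ne_top
        (ENNReal.rpow_lt_top_of_nonneg (by norm_num) (measure_ne_top _ _)).ne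
        (ENNReal.rpow_lt_top_of_nonneg (by norm_num) (measure_ne_top _ _)).ne
    · exact ENNReal.mul_ne_top
        (ENNReal.rpow_lt_top_of_nonneg (by norm_num) (measure_ne_top _ _)).ne
        (ENNReal.rpow_lt_top_of_nonneg (by norm_num) (measure_ne_top _ _)).ne
  -- final algebra
  have h_alg : (Real.sqrt b * Real.sqrt a + Real.sqrt (1-b) * Real.sqrt (1-a))^2
      ≤ 1 - (a - b)^2 := by
    have h1 := Real.sq_sqrt ha01.1
    have h2 := Real.sq_sqrt hb01.1
    have h3 := Real.sq_sqrt (by linarith [ha01.2] : (0:ℝ) ≤ 1 - a)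
    have h4 := Real.sq_sqrt (by linarith [hb01.2] : (0:ℝ) ≤ 1 - b)
    nlinarith [sq_nonneg (Real.sqrt b * Real.sqrt (1-b) - Real.sqrt a * Real.sqrt (1-a)),
      Real.sqrt_nonneg a, Real.sqrt_nonneg b, Real.sqrt_nonneg (1-a), Real.sqrt_nonneg (1-b)]
  calc Real.exp (-(∫ x, llr P Q x ∂P)) ≤ S^2 := h_exp_sq
    _ ≤ (Real.sqrt b * Real.sqrt a + Real.sqrt (1-b) * Real.sqrt (1-a))^2 := by
        apply pow_le_pow_left₀ hS_nonneg hS_le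
    _ ≤ 1 - (a - b)^2 := h_alg


/-- **Bretagnolle–Huber inequality.** For any two probability measures `P` and `Q` on a
common measurable space, `TV(P,Q) ≤ sqrt(1 − exp(−KL(P‖Q)))` (with the right-hand side
equal to `1` when `KL(P‖Q) = ∞`). -/
theorem bretagnolle_huber {Ω : Type*} [MeasurableSpace Ω] (P Q : Measure Ω)
    [IsProbabilityMeasure P] [IsProbabilityMeasure Q] :
    tvDist P Q ≤
      if klDivM P Q = ⊤ then 1
      else Real.sqrt (1 - Real.exp (-(klDivM P Q).toReal)) := by
  haveI : Nonempty {s : Set Ω // MeasurableSet s} := ⟨⟨∅, MeasurableSet.empty⟩⟩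
  have hbdd : ∀ E : {s : Set Ω // MeasurableSet s},
      |(P E.1).toReal - (Q E.1).toReal| ≤ 1 := by
    intro E
    have h1 : (P E.1).toReal ≤ 1 := ENNReal.toReal_le_of_le_ofReal zero_le_one
      (by simpa using prob_le_one)
    have h2 : (Q E.1).toReal ≤ 1 := ENNReal.toReal_le_of_le_ofReal zero_le_one
      (by simpa using prob_le_one)
    rw [abs_sub_le_iff]
    constructor <;> linarith [ENNReal.toReal_nonneg (a := P E.1),
      ENNReal.toReal_nonneg (a := Q E.1)]
  split_ifs with htop
  · exact ciSup_le hbdd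
  · have hcond : P ≪ Q ∧ Integrable (llr P Q) P := by
      by_contra h
      exact htop (by rw [klDivM, if_neg h])
    have hkl : klDivM P Q = ENNReal.ofReal (∫ ω, llr P Q ω ∂P) := by
      rw [klDivM, if_pos hcond]
    set I : ℝ := ∫ ω, llr P Q ω ∂P with hI
    have hkey : ∀ E : Set Ω, MeasurableSet E →
        Real.exp (-I) ≤ 1 - ((P E).toReal - (Q E).toReal)^2 :=
      fun E hE => BH_key P Q hcond.1 hcond.2 E hE
    have hI_nonneg : 0 ≤ I := by
      have := hkey ∅ MeasurableSet.empty
      norm_num at this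
      linarith
    refine ciSup_le fun E => ?_
    have h := hkey E.1 E.2
    have hrw : (klDivM P Q).toReal = I := by
      rw [hkl, ENNReal.toReal_ofReal hI_nonneg]
    rw [hrw]
    exact Real.abs_le_sqrt (by linarith)
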